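/- Let G be a finite simple graph in which every vertex has degree n, and suppose that for every vertex v the neighborhood of v misses at least one edge (i.e., is not a complete graph on n vertices). Then for every vertex v, if w is a vertex in the neighborhood of v of maximal 'antidegree' k = (n-1) - deg_{O(v)}(w) within O(v), and the neighborhood of w misses fewer than n/2 edges, then there exist at least k vertices in O(w) adjacent to all other vertices of O(w). -/

import Mathlib

/-- If every vertex of a finite graph `G` has degree `n`, every neighborhood misses at
least one edge, `w` is a vertex of maximal antidegree `k = (n-1) - deg_{O(v)}(w)` in the
neighborhood `O(v)` of `v`, and the neighborhood `O(w)` misses fewer than `n/2` edges,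
then `O(w)` contains at least `k` vertices adjacent to all other vertices of `O(w)`. -/
theorem stmt1 {V : Type} [Fintype V] (G : SimpleGraph V) (n : ℕ)
    (hreg : ∀ v : V, Nat.card (G.neighborSet v) = n)
    (hnotcomplete : ∀ v : V,
      Nat.card (G.induce (G.neighborSet v)).edgeSet < n * (n - 1) / 2)
    (v w : V) (hw : w ∈ G.neighborSet v)
    -- `w` has maximal antidegree in `O(v)`; here `deg_{O(v)}(u) = |N(v) ∩ N(u)|`
    (hmax : ∀ u ∈ G.neighborSet v,
      (n - 1) - Nat.card ↥(G.neighborSet v ∩ G.neighborSet u) ≤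
        (n - 1) - Nat.card ↥(G.neighborSet v ∩ G.neighborSet w))
    -- `O(w)` misses fewer than `n/2` edges
    (hdense : 2 * (n * (n - 1) / 2 - Nat.card (G.induce (G.neighborSet w)).edgeSet) < n) :
    ∃ S : Set V, S ⊆ G.neighborSet w ∧
      (n - 1) - Nat.card ↥(G.neighborSet v ∩ G.neighborSet w) ≤ Nat.card S ∧
      ∀ x ∈ S, ∀ u ∈ G.neighborSet w, u ≠ x → G.Adj x u := by
  classical
  set A : Set V := G.neighborSet w with hA
  set H : SimpleGraph ↥A := G.induce A with hH
  set k : ℕ := (n - 1) - Nat.card ↥(G.neighborSet v ∩ G.neighborSet w) with hk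
  have hcardA : Fintype.card ↥A = n := by
    rw [← Nat.card_eq_fintype_card]; exact hreg w
  have hvA : v ∈ A := G.adj_symm hw
  set v' : ↥A := ⟨v, hvA⟩ with hv'
  -- degree of v' in H
  have hdeg : H.degree v' = Nat.card ↥(G.neighborSet v ∩ G.neighborSet w) := by
    rw [← SimpleGraph.card_neighborSet_eq_degree, ← Nat.card_eq_fintype_card]
    refine Nat.card_congr ⟨fun x => ⟨x.1.1, ?_, x.1.2⟩, fun y => ⟨⟨y.1, y.2.2⟩, ?_⟩,
      fun x => rfl, fun y => rfl⟩
    · exact x.2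
    · exact y.2.1
  -- edge counts
  have hunion : H.edgeFinset ∪ Hᶜ.edgeFinset = (⊤ : SimpleGraph ↥A).edgeFinset := by
    ext e
    induction e with
    | h a b =>
      simp only [Finset.mem_union, SimpleGraph.mem_edgeFinset, SimpleGraph.mem_edgeSet,
        SimpleGraph.compl_adj, SimpleGraph.top_adj]
      constructor
      · rintro (h | ⟨h, -⟩)
        · exact H.ne_of_adj h
        · exact h
      · intro h
        by_cases hadj : H.Adj a b
        · exact Or.inl hadj
        · exact Or.inr ⟨h, hadj⟩
  have hsum : H.edgeFinset.card + Hᶜ.edgeFinset.card = n * (n - 1) / 2 := by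
    rw [← Finset.card_union_of_disjoint
      (SimpleGraph.disjoint_edgeFinset.2 disjoint_compl_right), hunion,
      SimpleGraph.card_edgeFinset_top_eq_card_choose_two, hcardA, Nat.choose_two_right]
  set m : ℕ := Hᶜ.edgeFinset.card with hm
  have hEF : Nat.card H.edgeSet = H.edgeFinset.card := by
    rw [SimpleGraph.edgeFinset_card, Nat.card_eq_fintype_card]
  have hdense' : 2 * m < n := by omega
  -- degree of v' in Hᶜ is k
  have hdegc : Hᶜ.degree v' = k := by
    rw [SimpleGraph.degree_compl, hcardA, hdeg]
  -- handshake
  have hhs : ∑ u : ↥A, Hᶜ.degree u = 2 * m := Hᶜ.sum_degrees_eq_twice_card_edges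
  -- isolated vertices in Hᶜ
  set I : Finset ↥A := Finset.univ.filter (fun u => Hᶜ.degree u = 0) with hI
  set s : Finset ↥A := Finset.univ.filter (fun u => Hᶜ.degree u ≠ 0) with hs
  have hIs : I.card + s.card = n := by
    rw [← hcardA, ← Finset.card_univ]
    rw [hI, hs, Finset.card_filter_add_card_filter_not]
  have hkI : k ≤ I.card := by
    rcases Nat.eq_zero_or_pos k with hk0 | hkpos
    · omega
    · have hv's : v' ∈ s := by
        simp only [hs, Finset.mem_filter, Finset.mem_univ, true_and]
        omega
      have h1 : ∀ u ∈ s.erase v', 1 ≤ Hᶜ.degree u := by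
        intro u hu
        have := (Finset.mem_erase.1 hu).2
        simp only [hs, Finset.mem_filter] at this
        omega
      have h2 : (s.erase v').card ≤ ∑ u ∈ s.erase v', Hᶜ.degree u := by
        calc (s.erase v').card = ∑ _u ∈ s.erase v', 1 := by simp
        _ ≤ _ := Finset.sum_le_sum h1
      have h3 : ∑ u ∈ s, Hᶜ.degree u ≤ ∑ u : ↥A, Hᶜ.degree u :=
        Finset.sum_le_sum_of_subset (Finset.subset_univ s)
      rw [← Finset.add_sum_erase _ _ hv's] at h3
      have h4 : (s.erase v').card = s.card - 1 := Finset.card_erase_of_mem hv's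
      have h5 : 1 ≤ s.card := Finset.card_pos.2 ⟨v', hv's⟩
      omega
  -- conclusion
  refine ⟨Subtype.val '' (↑I : Set ↥A), ?_, ?_, ?_⟩
  · rintro x ⟨y, _, rfl⟩; exact y.2
  · rw [Nat.card_coe_set_eq, Set.ncard_image_of_injective _ Subtype.val_injective,
      Set.ncard_coe_finset]
    exact hkI
  · rintro x ⟨y, hy, rfl⟩ u hu hne
    simp only [hI, Finset.mem_coe, Finset.mem_filter] at hy
    by_contra hadj
    have hyu : Hᶜ.Adj y ⟨u, hu⟩ := by
      rw [SimpleGraph.compl_adj]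
      refine ⟨fun h => hne (congrArg Subtype.val h).symm, ?_⟩
      intro h
      exact hadj h
    have : 0 < Hᶜ.degree y := by
      rw [← SimpleGraph.card_neighborSet_eq_degree]
      exact Fintype.card_pos_iff.2 ⟨⟨⟨u, hu⟩, hyu⟩⟩
    omega
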